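/- (Summability of block gradients) Along any sequence generated by the algorithm, with τ = max{L_i : i = 1,…,n}, the total sum of squared block-gradient norms is finite and bounded by the initial value: Σ_{k=1}^∞ Σ_{i=1}^n ‖∇_i f(x^{k,i−1})‖² ≤ 2τ f(x^0). -/

import Mathlib

set_option maxHeartbeats 1000000


open Finset Filter RealInnerProductSpace

noncomputable def obj {d n : ℕ} {J : Type*} (a : J → EuclideanSpace ℝ (Fin d))
    (A : Fin n → Finset J) (dhat : Fin n → J → ℝ)
    (B : Fin n → Finset (Fin n)) (lhat : Fin n → Fin n → ℝ)
    (x : Fin n → EuclideanSpace ℝ (Fin d)) : ℝ :=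
  (∑ i, ∑ j ∈ A i, max (‖x i - a j‖ - dhat i j) 0 ^ 2)
    + (1 / 2) * ∑ i, ∑ q ∈ B i, max (‖x i - x q‖ - lhat i q) 0 ^ 2

noncomputable def projBall {d : ℕ} (a : EuclideanSpace ℝ (Fin d)) (r : ℝ)
    (z : EuclideanSpace ℝ (Fin d)) : EuclideanSpace ℝ (Fin d) :=
  if ‖z - a‖ ≤ r then z else a + (r / ‖z - a‖) • (z - a)

/-- Partial gradient of `f` with respect to the `i`-th block. -/
noncomputable def blockGrad {d n : ℕ} (f : (Fin n → EuclideanSpace ℝ (Fin d)) → ℝ)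
    (i : Fin n) (x : Fin n → EuclideanSpace ℝ (Fin d)) : EuclideanSpace ℝ (Fin d) :=
  gradient (fun y => f (Function.update x i y)) (x i)

/-- The Coop. PPM algorithm: `X (k+1)` is obtained from `X k` by updating the
blocks successively for `i = 1, …, n`. -/
def IsPPM {d n : ℕ} {J : Type*} (a : J → EuclideanSpace ℝ (Fin d))
    (A : Fin n → Finset J) (dhat : Fin n → J → ℝ)
    (B : Fin n → Finset (Fin n)) (lhat : Fin n → Fin n → ℝ)
    (X : ℕ → Fin n → EuclideanSpace ℝ (Fin d)) : Prop :=
  ∀ (k : ℕ) (i : Fin n),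
    X (k + 1) i = (1 / 2 : ℝ) • X k i
      + (1 / (2 * (((A i).card : ℝ) + ((B i).card : ℝ)))) •
        ((∑ j ∈ A i, projBall (a j) (dhat i j) (X k i))
          + ∑ q ∈ B i, projBall (if q < i then X (k + 1) q else X k q) (lhat i q) (X k i))

/-- The intermediate configuration `x^{k+1, m}`: the first `m` blocks are those of
`X (k+1)` and the remaining blocks are those of `X k`. -/
def interm {d n : ℕ} (X : ℕ → Fin n → EuclideanSpace ℝ (Fin d)) (k m : ℕ) :
    Fin n → EuclideanSpace ℝ (Fin d) :=
  fun t => if (t : ℕ) < m then X (k + 1) t else X k t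


variable {d : ℕ}

lemma projBall_mem (a : EuclideanSpace ℝ (Fin d)) {r : ℝ} (hr : 0 ≤ r)
    (z : EuclideanSpace ℝ (Fin d)) : ‖projBall a r z - a‖ ≤ r := by
  unfold projBall
  split_ifs with h
  · simpa using h
  · push_neg at h
    have ht : 0 < ‖z - a‖ := lt_of_le_of_lt hr h
    have : a + (r / ‖z - a‖) • (z - a) - a = (r / ‖z - a‖) • (z - a) := by abel
    rw [this, norm_smul]
    rw [Real.norm_eq_abs, abs_of_nonneg (div_nonneg hr ht.le)]
    field_simp
    exact le_rfl

lemma norm_sub_projBall (a : EuclideanSpace ℝ (Fin d)) {r : ℝ} (hr : 0 ≤ r)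
    (z : EuclideanSpace ℝ (Fin d)) : ‖z - projBall a r z‖ = max (‖z - a‖ - r) 0 := by
  unfold projBall
  split_ifs with h
  · simp [max_eq_right (by linarith : ‖z - a‖ - r ≤ 0)]
  · push_neg at h
    have ht : 0 < ‖z - a‖ := lt_of_le_of_lt hr h
    have : z - (a + (r / ‖z - a‖) • (z - a)) = (1 - r / ‖z - a‖) • (z - a) := by
      rw [sub_smul, one_smul]; abel
    rw [this, norm_smul, Real.norm_eq_abs, abs_of_nonneg (by
      rw [sub_nonneg, div_le_one ht]; exact h.le)]
    rw [max_eq_left (by linarith : (0:ℝ) ≤ ‖z - a‖ - r)]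
    field_simp

lemma inner_varineq (a : EuclideanSpace ℝ (Fin d)) {r : ℝ} (hr : 0 ≤ r)
    (z w : EuclideanSpace ℝ (Fin d)) (hw : ‖w - a‖ ≤ r) :
    ⟪z - projBall a r z, w - projBall a r z⟫ ≤ 0 := by
  unfold projBall
  split_ifs with h
  · simp
  · push_neg at h
    have ht : 0 < ‖z - a‖ := lt_of_le_of_lt hr h
    have h1 : z - (a + (r / ‖z - a‖) • (z - a)) = (1 - r / ‖z - a‖) • (z - a) := by
      rw [sub_smul, one_smul]; abel
    have h2 : w - (a + (r / ‖z - a‖) • (z - a)) = (w - a) - (r / ‖z - a‖) • (z - a) := by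
      abel
    rw [h1, h2, real_inner_smul_left, inner_sub_right, real_inner_smul_right,
      real_inner_self_eq_norm_sq]
    have hle : ⟪z - a, w - a⟫ ≤ ‖z - a‖ * r :=
      le_trans (real_inner_le_norm _ _) (by nlinarith [norm_nonneg (z - a)])
    have hc : 0 ≤ 1 - r / ‖z - a‖ := by
      rw [sub_nonneg, div_le_one ht]; exact h.le
    have : ⟪z - a, w - a⟫ - r / ‖z - a‖ * ‖z - a‖ ^ 2 ≤ 0 := by
      have : r / ‖z - a‖ * ‖z - a‖ ^ 2 = ‖z - a‖ * r := by field_simp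
      rw [this]; linarith
    exact mul_nonpos_of_nonneg_of_nonpos hc this

lemma sq_norm_sub_projBall_le (a : EuclideanSpace ℝ (Fin d)) {r : ℝ} (hr : 0 ≤ r)
    (z w : EuclideanSpace ℝ (Fin d)) (hw : ‖w - a‖ ≤ r) :
    ‖z - projBall a r z‖ ^ 2 ≤ ‖z - w‖ ^ 2 := by
  have key : z - w = (z - projBall a r z) + (projBall a r z - w) := by abel
  rw [key, norm_add_sq_real]
  have h1 : 0 ≤ ⟪z - projBall a r z, projBall a r z - w⟫ := by
    have := inner_varineq a hr z w hw
    have h2 : projBall a r z - w = -(w - projBall a r z) := by abel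
    rw [h2, inner_neg_right]; linarith
  nlinarith [sq_nonneg ‖projBall a r z - w‖]

lemma hinge_upper (a : EuclideanSpace ℝ (Fin d)) {r : ℝ} (hr : 0 ≤ r)
    (z h : EuclideanSpace ℝ (Fin d)) :
    max (‖z + h - a‖ - r) 0 ^ 2 ≤ max (‖z - a‖ - r) 0 ^ 2
      + ⟪(2:ℝ) • (z - projBall a r z), h⟫ + ‖h‖ ^ 2 := by
  have e1 : max (‖z + h - a‖ - r) 0 ^ 2 = ‖(z + h) - projBall a r (z + h)‖ ^ 2 := by
    rw [norm_sub_projBall a hr]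
  have e2 : max (‖z - a‖ - r) 0 ^ 2 = ‖z - projBall a r z‖ ^ 2 := by
    rw [norm_sub_projBall a hr]
  rw [e1, e2]
  have hmem : ‖projBall a r z - a‖ ≤ r := projBall_mem a hr z
  have h1 : ‖(z + h) - projBall a r (z + h)‖ ^ 2 ≤ ‖(z + h) - projBall a r z‖ ^ 2 :=
    sq_norm_sub_projBall_le a hr (z + h) _ hmem
  have e3 : (z + h) - projBall a r z = (z - projBall a r z) + h := by abel
  rw [e3, norm_add_sq_real] at h1
  rw [real_inner_smul_left]
  linarith

lemma hinge_lower (a : EuclideanSpace ℝ (Fin d)) {r : ℝ} (hr : 0 ≤ r)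
    (z w : EuclideanSpace ℝ (Fin d)) :
    max (‖z - a‖ - r) 0 ^ 2 + ⟪(2:ℝ) • (z - projBall a r z), w - z⟫
      ≤ max (‖w - a‖ - r) 0 ^ 2 := by
  have e1 : max (‖z - a‖ - r) 0 ^ 2 = ‖z - projBall a r z‖ ^ 2 := by
    rw [norm_sub_projBall a hr]
  have e2 : max (‖w - a‖ - r) 0 ^ 2 = ‖w - projBall a r w‖ ^ 2 := by
    rw [norm_sub_projBall a hr]
  rw [e1, e2]
  set P := projBall a r z
  set Q := projBall a r w
  have key : w - Q = (z - P) + ((w - z) + (P - Q)) := by abel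
  have expand : ‖w - Q‖ ^ 2 = ‖z - P‖ ^ 2 + 2 * ⟪z - P, (w - z) + (P - Q)⟫
      + ‖(w - z) + (P - Q)‖ ^ 2 := by rw [key, norm_add_sq_real]
  have h1 : 0 ≤ ⟪z - P, P - Q⟫ := by
    have := inner_varineq a hr z Q (projBall_mem a hr w)
    have h2 : P - Q = -(Q - P) := by abel
    rw [h2, inner_neg_right]; linarith
  rw [inner_add_right] at expand
  rw [real_inner_smul_left]
  nlinarith [sq_nonneg ‖(w - z) + (P - Q)‖]

lemma hasGradientAt_hinge (a : EuclideanSpace ℝ (Fin d)) {r : ℝ} (hr : 0 ≤ r)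
    (z : EuclideanSpace ℝ (Fin d)) :
    HasGradientAt (fun y => max (‖y - a‖ - r) 0 ^ 2)
      ((2:ℝ) • (z - projBall a r z)) z := by
  rw [hasGradientAt_iff_isLittleO]
  rw [Asymptotics.isLittleO_iff]
  intro c hc
  filter_upwards [Metric.ball_mem_nhds z hc] with w hw
  have hd : ‖w - z‖ < c := by
    rw [Metric.mem_ball, dist_eq_norm] at hw; exact hw
  have hup := hinge_upper a hr z (w - z)
  rw [show z + (w - z) = w by abel] at hup
  have hlo := hinge_lower a hr z w
  have habs : |max (‖w - a‖ - r) 0 ^ 2 - max (‖z - a‖ - r) 0 ^ 2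
      - ⟪(2:ℝ) • (z - projBall a r z), w - z⟫| ≤ ‖w - z‖ ^ 2 := by
    rw [abs_le]; constructor <;> nlinarith [sq_nonneg ‖w - z‖]
  calc ‖max (‖w - a‖ - r) 0 ^ 2 - max (‖z - a‖ - r) 0 ^ 2
      - ⟪(2:ℝ) • (z - projBall a r z), w - z⟫‖ ≤ ‖w - z‖ ^ 2 := by
        rw [Real.norm_eq_abs]; exact habs
    _ ≤ c * ‖w - z‖ := by nlinarith [norm_nonneg (w - z)]

lemma HasGradientAt.sum_finset {ι : Type*} (s : Finset ι) {f : ι → EuclideanSpace ℝ (Fin d) → ℝ}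
    {g : ι → EuclideanSpace ℝ (Fin d)} {x : EuclideanSpace ℝ (Fin d)}
    (h : ∀ i ∈ s, HasGradientAt (f i) (g i) x) :
    HasGradientAt (fun y => ∑ i ∈ s, f i y) (∑ i ∈ s, g i) x := by
  rw [hasGradientAt_iff_hasFDerivAt, map_sum]
  exact HasFDerivAt.fun_sum (fun i hi => hasGradientAt_iff_hasFDerivAt.mp (h i hi))

lemma HasGradientAt.add_const {f : EuclideanSpace ℝ (Fin d) → ℝ}
    {g x : EuclideanSpace ℝ (Fin d)} (hf : HasGradientAt f g x) (c : ℝ) :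
    HasGradientAt (fun y => f y + c) g x := by
  rw [hasGradientAt_iff_hasFDerivAt] at hf ⊢
  exact hf.add_const c

lemma sum_erase_split {M : Type*} [AddCommMonoid M] {α : Type*} [DecidableEq α]
    (s : Finset α) (i : α) (f : α → M) :
    ∑ q ∈ s, f q = (∑ q ∈ s.erase i, f q) + (if i ∈ s then f i else 0) := by
  by_cases h : i ∈ s
  · rw [if_pos h]; exact (Finset.sum_erase_add s f h).symm
  · rw [if_neg h, Finset.erase_eq_of_notMem h, add_zero]

noncomputable def rest {d n : ℕ} {J : Type*} (a : J → EuclideanSpace ℝ (Fin d))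
    (A : Fin n → Finset J) (dhat : Fin n → J → ℝ)
    (B : Fin n → Finset (Fin n)) (lhat : Fin n → Fin n → ℝ)
    (x : Fin n → EuclideanSpace ℝ (Fin d)) (i : Fin n) : ℝ :=
  (∑ i' ∈ univ.erase i, ∑ j ∈ A i', max (‖x i' - a j‖ - dhat i' j) 0 ^ 2)
    + (1/2) * ∑ i' ∈ univ.erase i, ∑ q ∈ (B i').erase i,
        max (‖x i' - x q‖ - lhat i' q) 0 ^ 2

lemma obj_update_eq {d n : ℕ} {J : Type*} (a : J → EuclideanSpace ℝ (Fin d))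
    (A : Fin n → Finset J) (dhat : Fin n → J → ℝ)
    (B : Fin n → Finset (Fin n)) (lhat : Fin n → Fin n → ℝ)
    (hBirr : ∀ i : Fin n, i ∉ B i)
    (hBsymm : ∀ i q : Fin n, q ∈ B i ↔ i ∈ B q)
    (hlsymm : ∀ i q : Fin n, lhat i q = lhat q i)
    (x : Fin n → EuclideanSpace ℝ (Fin d)) (i : Fin n) (y : EuclideanSpace ℝ (Fin d)) :
    obj a A dhat B lhat (Function.update x i y)
      = ((∑ j ∈ A i, max (‖y - a j‖ - dhat i j) 0 ^ 2)
          + ∑ q ∈ B i, max (‖y - x q‖ - lhat i q) 0 ^ 2)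
        + rest a A dhat B lhat x i := by
  classical
  unfold obj rest
  have hupd : ∀ i' : Fin n, i' ≠ i → Function.update x i y i' = x i' :=
    fun i' h => Function.update_of_ne h y x
  have e1 : (∑ i' : Fin n, ∑ j ∈ A i',
        max (‖Function.update x i y i' - a j‖ - dhat i' j) 0 ^ 2)
      = (∑ j ∈ A i, max (‖y - a j‖ - dhat i j) 0 ^ 2)
        + ∑ i' ∈ univ.erase i, ∑ j ∈ A i', max (‖x i' - a j‖ - dhat i' j) 0 ^ 2 := by
    rw [← Finset.add_sum_erase Finset.univ _ (Finset.mem_univ i), Function.update_self]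
    congr 1
    exact Finset.sum_congr rfl fun i' hi' => by
      rw [hupd i' (Finset.ne_of_mem_erase hi')]
  have e2 : (∑ i' : Fin n, ∑ q ∈ B i',
        max (‖Function.update x i y i' - Function.update x i y q‖ - lhat i' q) 0 ^ 2)
      = (∑ q ∈ B i, max (‖y - x q‖ - lhat i q) 0 ^ 2)
        + ((∑ q ∈ B i, max (‖y - x q‖ - lhat i q) 0 ^ 2)
          + ∑ i' ∈ univ.erase i, ∑ q ∈ (B i').erase i,
              max (‖x i' - x q‖ - lhat i' q) 0 ^ 2) := by
    rw [← Finset.add_sum_erase Finset.univ _ (Finset.mem_univ i)]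
    congr 1
    · rw [Function.update_self]
      refine Finset.sum_congr rfl fun q hq => ?_
      have hqi : q ≠ i := fun h => hBirr i (h ▸ hq)
      rw [hupd q hqi]
    · have estep : ∀ i' ∈ univ.erase i,
          (∑ q ∈ B i',
            max (‖Function.update x i y i' - Function.update x i y q‖ - lhat i' q) 0 ^ 2)
          = (∑ q ∈ (B i').erase i, max (‖x i' - x q‖ - lhat i' q) 0 ^ 2)
            + (if i ∈ B i' then max (‖x i' - y‖ - lhat i' i) 0 ^ 2 else 0) := by
        intro i' hi'
        have hne := Finset.ne_of_mem_erase hi'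
        rw [sum_erase_split (B i') i]
        congr 1
        · exact Finset.sum_congr rfl fun q hq => by
            rw [hupd i' hne, hupd q (Finset.ne_of_mem_erase hq)]
        · by_cases h : i ∈ B i'
          · rw [if_pos h, if_pos h, hupd i' hne, Function.update_self]
          · rw [if_neg h, if_neg h]
      rw [Finset.sum_congr rfl estep, Finset.sum_add_distrib, add_comm]
      congr 1
      · rw [← Finset.sum_filter]
        have hset : (univ.erase i).filter (fun i' => i ∈ B i') = B i := by
          ext q
          simp only [Finset.mem_filter, Finset.mem_erase, Finset.mem_univ, and_true, true_and]
          constructor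
          · rintro ⟨_, hmem⟩; exact (hBsymm i q).mpr hmem
          · intro hq; exact ⟨fun h => hBirr i (h ▸ hq), (hBsymm i q).mp hq⟩
        rw [hset]
        exact Finset.sum_congr rfl fun q _ => by rw [norm_sub_rev, hlsymm q i]
  rw [e1, e2]; ring

noncomputable def Gvec {d n : ℕ} {J : Type*} (a : J → EuclideanSpace ℝ (Fin d))
    (A : Fin n → Finset J) (dhat : Fin n → J → ℝ)
    (B : Fin n → Finset (Fin n)) (lhat : Fin n → Fin n → ℝ)
    (x : Fin n → EuclideanSpace ℝ (Fin d)) (i : Fin n) : EuclideanSpace ℝ (Fin d) :=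
  (∑ j ∈ A i, (2:ℝ) • (x i - projBall (a j) (dhat i j) (x i)))
    + ∑ q ∈ B i, (2:ℝ) • (x i - projBall (x q) (lhat i q) (x i))

lemma hasGradientAt_obj_update {d n : ℕ} {J : Type*} (a : J → EuclideanSpace ℝ (Fin d))
    (A : Fin n → Finset J) (dhat : Fin n → J → ℝ)
    (B : Fin n → Finset (Fin n)) (lhat : Fin n → Fin n → ℝ)
    (hdhat : ∀ i, ∀ j ∈ A i, 0 ≤ dhat i j)
    (hlhat : ∀ i, ∀ q ∈ B i, 0 ≤ lhat i q)
    (hBirr : ∀ i : Fin n, i ∉ B i)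
    (hBsymm : ∀ i q : Fin n, q ∈ B i ↔ i ∈ B q)
    (hlsymm : ∀ i q : Fin n, lhat i q = lhat q i)
    (x : Fin n → EuclideanSpace ℝ (Fin d)) (i : Fin n) :
    HasGradientAt (fun y => obj a A dhat B lhat (Function.update x i y))
      (Gvec a A dhat B lhat x i) (x i) := by
  have key : (fun y => obj a A dhat B lhat (Function.update x i y))
      = fun y => ((∑ j ∈ A i, max (‖y - a j‖ - dhat i j) 0 ^ 2)
          + ∑ q ∈ B i, max (‖y - x q‖ - lhat i q) 0 ^ 2)
        + rest a A dhat B lhat x i :=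
    funext fun y => obj_update_eq a A dhat B lhat hBirr hBsymm hlsymm x i y
  rw [key]
  refine HasGradientAt.add_const ?_ _
  have hA : HasGradientAt (fun y => ∑ j ∈ A i, max (‖y - a j‖ - dhat i j) 0 ^ 2)
      (∑ j ∈ A i, (2:ℝ) • (x i - projBall (a j) (dhat i j) (x i))) (x i) :=
    HasGradientAt.sum_finset (A i) fun j hj => hasGradientAt_hinge (a j) (hdhat i j hj) (x i)
  have hB : HasGradientAt (fun y => ∑ q ∈ B i, max (‖y - x q‖ - lhat i q) 0 ^ 2)
      (∑ q ∈ B i, (2:ℝ) • (x i - projBall (x q) (lhat i q) (x i))) (x i) :=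
    HasGradientAt.sum_finset (B i) fun q hq => hasGradientAt_hinge (x q) (hlhat i q hq) (x i)
  rw [hasGradientAt_iff_hasFDerivAt] at hA hB ⊢
  rw [Gvec, map_add]
  exact hA.add hB

lemma obj_update_le {d n : ℕ} {J : Type*} (a : J → EuclideanSpace ℝ (Fin d))
    (A : Fin n → Finset J) (dhat : Fin n → J → ℝ)
    (B : Fin n → Finset (Fin n)) (lhat : Fin n → Fin n → ℝ)
    (hdhat : ∀ i, ∀ j ∈ A i, 0 ≤ dhat i j)
    (hlhat : ∀ i, ∀ q ∈ B i, 0 ≤ lhat i q)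
    (hBirr : ∀ i : Fin n, i ∉ B i)
    (hBsymm : ∀ i q : Fin n, q ∈ B i ↔ i ∈ B q)
    (hlsymm : ∀ i q : Fin n, lhat i q = lhat q i)
    (x : Fin n → EuclideanSpace ℝ (Fin d)) (i : Fin n) (h : EuclideanSpace ℝ (Fin d)) :
    obj a A dhat B lhat (Function.update x i (x i + h))
      ≤ obj a A dhat B lhat x + ⟪Gvec a A dhat B lhat x i, h⟫
        + ((((A i).card : ℝ) + ((B i).card : ℝ))) * ‖h‖ ^ 2 := by
  have hx : obj a A dhat B lhat x
      = ((∑ j ∈ A i, max (‖x i - a j‖ - dhat i j) 0 ^ 2)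
          + ∑ q ∈ B i, max (‖x i - x q‖ - lhat i q) 0 ^ 2)
        + rest a A dhat B lhat x i := by
    conv_lhs => rw [← Function.update_eq_self i x]
    exact obj_update_eq a A dhat B lhat hBirr hBsymm hlsymm x i (x i)
  rw [obj_update_eq a A dhat B lhat hBirr hBsymm hlsymm x i (x i + h), hx]
  have HA : ∑ j ∈ A i, max (‖x i + h - a j‖ - dhat i j) 0 ^ 2
      ≤ (∑ j ∈ A i, max (‖x i - a j‖ - dhat i j) 0 ^ 2)
        + ⟪∑ j ∈ A i, (2:ℝ) • (x i - projBall (a j) (dhat i j) (x i)), h⟫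
        + ((A i).card : ℝ) * ‖h‖ ^ 2 := by
    have hs := Finset.sum_le_sum (fun j hj => hinge_upper (a j) (hdhat i j hj) (x i) h)
    simp only [Finset.sum_add_distrib, Finset.sum_const, nsmul_eq_mul] at hs
    rw [sum_inner]
    linarith
  have HB : ∑ q ∈ B i, max (‖x i + h - x q‖ - lhat i q) 0 ^ 2
      ≤ (∑ q ∈ B i, max (‖x i - x q‖ - lhat i q) 0 ^ 2)
        + ⟪∑ q ∈ B i, (2:ℝ) • (x i - projBall (x q) (lhat i q) (x i)), h⟫
        + ((B i).card : ℝ) * ‖h‖ ^ 2 := by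
    have hs := Finset.sum_le_sum (fun q hq => hinge_upper (x q) (hlhat i q hq) (x i) h)
    simp only [Finset.sum_add_distrib, Finset.sum_const, nsmul_eq_mul] at hs
    rw [sum_inner]
    linarith
  have hG : ⟪Gvec a A dhat B lhat x i, h⟫
      = ⟪∑ j ∈ A i, (2:ℝ) • (x i - projBall (a j) (dhat i j) (x i)), h⟫
        + ⟪∑ q ∈ B i, (2:ℝ) • (x i - projBall (x q) (lhat i q) (x i)), h⟫ := by
    rw [Gvec, inner_add_left]
  rw [hG]
  linarith

theorem stmt13 (d n : ℕ) (hd : 1 ≤ d) (hn : 1 ≤ n) {J : Type*} [Fintype J]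
    (a : J → EuclideanSpace ℝ (Fin d))
    (A : Fin n → Finset J) (dhat : Fin n → J → ℝ)
    (B : Fin n → Finset (Fin n)) (lhat : Fin n → Fin n → ℝ)
    (hdhat : ∀ i, ∀ j ∈ A i, 0 ≤ dhat i j)
    (hlhat : ∀ i, ∀ q ∈ B i, 0 ≤ lhat i q)
    (hBirr : ∀ i : Fin n, i ∉ B i)
    (hBsymm : ∀ i q : Fin n, q ∈ B i ↔ i ∈ B q)
    (hlsymm : ∀ i q : Fin n, lhat i q = lhat q i)
    (hcard : ∀ i : Fin n, 1 ≤ (A i).card + (B i).card)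
    (X : ℕ → Fin n → EuclideanSpace ℝ (Fin d))
    (hX : IsPPM a A dhat B lhat X)
    (τ : ℝ)
    (hτ : IsGreatest (Set.range fun i : Fin n =>
      4 * (((A i).card : ℝ) + ((B i).card : ℝ))) τ) :
    Summable (fun k : ℕ =>
      ∑ i : Fin n, ‖blockGrad (obj a A dhat B lhat) i (interm X k (i : ℕ))‖ ^ 2) ∧
    (∑' k : ℕ, ∑ i : Fin n, ‖blockGrad (obj a A dhat B lhat) i (interm X k (i : ℕ))‖ ^ 2)
      ≤ 2 * τ * obj a A dhat B lhat (X 0) := by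
  classical
  obtain ⟨i0, hi0⟩ := hτ.1
  have hcardR : ∀ i : Fin n, (1:ℝ) ≤ ((A i).card : ℝ) + ((B i).card : ℝ) := by
    intro i
    have h1 : ((1:ℕ):ℝ) ≤ (((A i).card + (B i).card : ℕ) : ℝ) := Nat.cast_le.mpr (hcard i)
    push_cast at h1
    linarith
  have hτpos : 0 < τ := by
    have h1 := hcardR i0
    have hi0' : 4 * (((A i0).card : ℝ) + ((B i0).card : ℝ)) = τ := hi0
    nlinarith
  have hτub : ∀ i : Fin n, 4 * (((A i).card : ℝ) + ((B i).card : ℝ)) ≤ τ :=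
    fun i => hτ.2 ⟨i, rfl⟩
  have obj_nonneg : ∀ y, 0 ≤ obj a A dhat B lhat y := by
    intro y
    unfold obj
    have h1 : 0 ≤ ∑ i, ∑ j ∈ A i, max (‖y i - a j‖ - dhat i j) 0 ^ 2 :=
      Finset.sum_nonneg fun i _ => Finset.sum_nonneg fun j _ => sq_nonneg _
    have h2 : 0 ≤ ∑ i, ∑ q ∈ B i, max (‖y i - y q‖ - lhat i q) 0 ^ 2 :=
      Finset.sum_nonneg fun i _ => Finset.sum_nonneg fun j _ => sq_nonneg _
    linarith
  have main : ∀ (k : ℕ) (i : Fin n),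
      ‖blockGrad (obj a A dhat B lhat) i (interm X k (i : ℕ))‖ ^ 2
        ≤ 2 * τ * (obj a A dhat B lhat (interm X k (i : ℕ))
            - obj a A dhat B lhat (interm X k ((i : ℕ) + 1))) := by
    intro k i
    set x := interm X k (i : ℕ) with hxdef
    set m : ℝ := ((A i).card : ℝ) + ((B i).card : ℝ) with hmdef
    have hm1 : (1:ℝ) ≤ m := hcardR i
    have hm0 : m ≠ 0 := by linarith
    have hcc : ((A i).card : ℝ) + ((B i).card : ℝ) ≠ 0 := by rw [← hmdef]; exact hm0
    have hxi : x i = X k i := by simp [hxdef, interm]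
    set G := Gvec a A dhat B lhat x i with hGdef
    -- the algorithm step
    have hXk := hX k i
    have hc : ∀ q : Fin n, projBall (if q < i then X (k + 1) q else X k q) (lhat i q) (X k i)
        = projBall (x q) (lhat i q) (X k i) := by
      intro q
      have hcent : (if q < i then X (k + 1) q else X k q) = x q := by
        by_cases hq : (q : ℕ) < (i : ℕ)
        · rw [if_pos (Fin.lt_def.mpr hq)]
          simp [hxdef, interm, hq]
        · rw [if_neg (fun h => hq (Fin.lt_def.mp h))]
          simp [hxdef, interm, hq]
      rw [hcent]
    rw [Finset.sum_congr rfl (fun q _ => hc q), ← hxi, ← hmdef] at hXk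
    have hstep : X (k + 1) i = x i + (-(1 / (4 * m))) • G := by
      rw [hXk, hGdef]
      simp only [Gvec, smul_sub, Finset.sum_sub_distrib, Finset.sum_const, ← Finset.smul_sum]
      match_scalars <;> (rw [hmdef]; field_simp; try ring)
    have hupdate : interm X k ((i : ℕ) + 1)
        = Function.update x i (x i + (-(1 / (4 * m))) • G) := by
      funext t
      by_cases ht : t = i
      · subst ht
        rw [Function.update_self, ← hstep]
        simp [interm]
      · rw [Function.update_of_ne ht]
        have hv : (t : ℕ) ≠ (i : ℕ) := fun h => ht (Fin.ext h)
        have hiff : ((t : ℕ) < (i : ℕ) + 1) ↔ ((t : ℕ) < (i : ℕ)) := by omega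
        simp only [hxdef, interm, hiff]
    have hgrad : blockGrad (obj a A dhat B lhat) i x = G := by
      rw [hGdef]
      unfold blockGrad
      exact HasGradientAt.gradient
        (hasGradientAt_obj_update a A dhat B lhat hdhat hlhat hBirr hBsymm hlsymm x i)
    have hdesc := obj_update_le a A dhat B lhat hdhat hlhat hBirr hBsymm hlsymm x i
      ((-(1 / (4 * m))) • G)
    rw [← hmdef, ← hGdef, ← hupdate] at hdesc
    have hinner : ⟪G, (-(1 / (4 * m))) • G⟫ = -(1 / (4 * m)) * ‖G‖ ^ 2 := by
      rw [real_inner_smul_right, real_inner_self_eq_norm_sq]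
    have hns : ‖(-(1 / (4 * m))) • G‖ ^ 2 = (1 / (4 * m))^ 2 * ‖G‖ ^ 2 := by
      rw [norm_smul, mul_pow, Real.norm_eq_abs, abs_neg,
        abs_of_nonneg (by positivity : (0:ℝ) ≤ 1 / (4 * m))]
    rw [hinner, hns] at hdesc
    rw [hgrad]
    have hQ : obj a A dhat B lhat (interm X k ((i : ℕ) + 1))
        ≤ obj a A dhat B lhat x - 3 / (16 * m) * ‖G‖ ^ 2 := by
      have e : -(1 / (4 * m)) * ‖G‖ ^ 2 + m * ((1 / (4 * m)) ^ 2 * ‖G‖ ^ 2)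
          = -(3 / (16 * m) * ‖G‖ ^ 2) := by field_simp; ring
      linarith [hdesc, e]
    have hGnn : (0:ℝ) ≤ ‖G‖ ^ 2 := sq_nonneg _
    have hfrac : (0:ℝ) ≤ 3 / (16 * m) * ‖G‖ ^ 2 :=
      mul_nonneg (div_nonneg (by norm_num) (by linarith)) hGnn
    have hD : 0 ≤ obj a A dhat B lhat x - obj a A dhat B lhat (interm X k ((i : ℕ) + 1)) := by
      linarith
    have hτi : 4 * m ≤ τ := by rw [hmdef]; exact hτub i
    have c1 : 8 * m * (3 / (16 * m) * ‖G‖ ^ 2)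
        ≤ 8 * m * (obj a A dhat B lhat x
            - obj a A dhat B lhat (interm X k ((i : ℕ) + 1))) := by
      apply mul_le_mul_of_nonneg_left _ (by linarith : (0:ℝ) ≤ 8 * m)
      linarith
    have c2 : 8 * m * (3 / (16 * m) * ‖G‖ ^ 2) = 3 / 2 * ‖G‖ ^ 2 := by
      field_simp; ring
    have c3 := mul_nonneg (sub_nonneg.mpr hτi) hD
    nlinarith
  have perk : ∀ k : ℕ,
      (∑ i : Fin n, ‖blockGrad (obj a A dhat B lhat) i (interm X k (i : ℕ))‖ ^ 2)
        ≤ 2 * τ * (obj a A dhat B lhat (X k) - obj a A dhat B lhat (X (k + 1))) := by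
    intro k
    have h0 : interm X k 0 = X k := funext fun t => by simp [interm]
    have hN : interm X k n = X (k + 1) := funext fun t => by simp [interm, t.isLt]
    calc (∑ i : Fin n, ‖blockGrad (obj a A dhat B lhat) i (interm X k (i : ℕ))‖ ^ 2)
        ≤ ∑ i : Fin n, 2 * τ * (obj a A dhat B lhat (interm X k (i : ℕ))
            - obj a A dhat B lhat (interm X k ((i : ℕ) + 1))) :=
          Finset.sum_le_sum fun i _ => main k i
      _ = 2 * τ * ∑ i : Fin n, (obj a A dhat B lhat (interm X k (i : ℕ))
            - obj a A dhat B lhat (interm X k ((i : ℕ) + 1))) := by rw [Finset.mul_sum]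
      _ = 2 * τ * ∑ i ∈ Finset.range n, (obj a A dhat B lhat (interm X k i)
            - obj a A dhat B lhat (interm X k (i + 1))) := by
          rw [Fin.sum_univ_eq_sum_range (fun i => obj a A dhat B lhat (interm X k i)
            - obj a A dhat B lhat (interm X k (i + 1))) n]
      _ = 2 * τ * (obj a A dhat B lhat (interm X k 0) - obj a A dhat B lhat (interm X k n)) := by
          rw [Finset.sum_range_sub' (fun i => obj a A dhat B lhat (interm X k i)) n]
      _ = 2 * τ * (obj a A dhat B lhat (X k) - obj a A dhat B lhat (X (k + 1))) := by
          rw [h0, hN]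
  have hterm_nonneg : ∀ k : ℕ,
      0 ≤ ∑ i : Fin n, ‖blockGrad (obj a A dhat B lhat) i (interm X k (i : ℕ))‖ ^ 2 :=
    fun k => Finset.sum_nonneg fun i _ => sq_nonneg _
  have hpartial : ∀ K : ℕ,
      (∑ k ∈ Finset.range K,
        ∑ i : Fin n, ‖blockGrad (obj a A dhat B lhat) i (interm X k (i : ℕ))‖ ^ 2)
        ≤ 2 * τ * obj a A dhat B lhat (X 0) := by
    intro K
    calc (∑ k ∈ Finset.range K,
          ∑ i : Fin n, ‖blockGrad (obj a A dhat B lhat) i (interm X k (i : ℕ))‖ ^ 2)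
        ≤ ∑ k ∈ Finset.range K,
            2 * τ * (obj a A dhat B lhat (X k) - obj a A dhat B lhat (X (k + 1))) :=
          Finset.sum_le_sum fun k _ => perk k
      _ = 2 * τ * ∑ k ∈ Finset.range K,
            (obj a A dhat B lhat (X k) - obj a A dhat B lhat (X (k + 1))) := by
          rw [Finset.mul_sum]
      _ = 2 * τ * (obj a A dhat B lhat (X 0) - obj a A dhat B lhat (X K)) := by
          rw [Finset.sum_range_sub' (fun k => obj a A dhat B lhat (X k)) K]
      _ ≤ 2 * τ * obj a A dhat B lhat (X 0) := by
          nlinarith [mul_nonneg hτpos.le (obj_nonneg (X K))]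
  exact ⟨summable_of_sum_range_le hterm_nonneg hpartial,
    Real.tsum_le_of_sum_range_le hterm_nonneg hpartial⟩
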